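/- Let $M = \begin{pmatrix} A & B \\ C & D \end{pmatrix}$ be the block form of an $N\times N$ Manin matrix with entries in an associative algebra $\mathcal{A}$, and suppose $\mathcal{A}$ embeds in a larger algebra $\mathcal{A}'$ in which the block $A$ has a right inverse $A^{-1}$. Then $\mathrm{cdet}\, M = \mathrm{cdet}(A)\cdot\mathrm{cdet}(D - C A^{-1} B)$, as an identity in $\mathcal{A}$. -/

import Mathlib

def cdet {A : Type*} [Ring A] {n : ℕ} (M : Matrix (Fin n) (Fin n) A) : A :=
  ∑ σ : Equiv.Perm (Fin n), ((Equiv.Perm.sign σ : ℤ) • (List.ofFn fun j => M (σ j) j).prod)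

def IsManin {A : Type*} [Ring A] {m n : Type*} (M : Matrix m n A) : Prop :=
  (∀ i k j, Commute (M i j) (M k j)) ∧
  (∀ i k j l, M i j * M k l - M k l * M i j = M k j * M i l - M i l * M k j)

namespace Stmt6Aux

open scoped TensorProduct

/-- Expansion of an ordered product of sums in a noncommutative ring. -/
lemma list_expand {R : Type*} [Ring R] {m : Type*} [Fintype m] [DecidableEq m] :
    ∀ (n : ℕ) (F : m → Fin n → R),
      (List.ofFn fun j => ∑ i, F i j).prod
        = ∑ g : Fin n → m, (List.ofFn fun j => F (g j) j).prod := by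
  intro n
  induction n with
  | zero =>
    intro F
    simp
  | succ n ih =>
    intro F
    rw [List.ofFn_succ, List.prod_cons, ih (fun i j => F i j.succ), Finset.sum_mul_sum]
    rw [← (Fin.consEquiv (fun _ : Fin (n+1) => m)).sum_comp, Fintype.sum_prod_type]
    refine Finset.sum_congr rfl fun i _ => Finset.sum_congr rfl fun g _ => ?_
    rw [List.ofFn_succ, List.prod_cons]
    simp [Fin.consEquiv]

/-- Pull commuting factors to the right. -/
lemma list_pull {R : Type*} [Ring R] :
    ∀ (n : ℕ) (v x : Fin n → R), (∀ i j, Commute (x i) (v j)) →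
      (List.ofFn fun j => v j * x j).prod = (List.ofFn v).prod * (List.ofFn x).prod := by
  intro n
  induction n with
  | zero => intro v x _; simp
  | succ n ih =>
    intro v x h
    rw [List.ofFn_succ, List.prod_cons, ih (fun j => v j.succ) (fun j => x j.succ)
      (fun i j => h i.succ j.succ)]
    rw [List.ofFn_succ (f := v), List.ofFn_succ (f := x), List.prod_cons, List.prod_cons]
    have hc : Commute (x 0) ((List.ofFn fun j => v j.succ).prod) := by
      refine Commute.list_prod_right _ _ fun y hy => ?_
      rw [List.mem_ofFn] at hy
      obtain ⟨j, rfl⟩ := hy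
      exact h 0 j.succ
    rw [mul_assoc, mul_assoc, ← mul_assoc (x 0), hc.eq, mul_assoc]

/-- Summing over a range of an injective map when the function vanishes off the range. -/
lemma sum_range_eq {α β M : Type*} [Fintype α] [Fintype β] [DecidableEq β] [AddCommMonoid M]
    (m : α → β) (hm : Function.Injective m) (F : β → M)
    (h0 : ∀ b, (∀ a, m a ≠ b) → F b = 0) : ∑ b, F b = ∑ a, F (m a) := by
  have himg : ∑ a, F (m a) = ∑ b ∈ Finset.univ.image m, F b :=
    (Finset.sum_image (fun a _ b _ h => hm h)).symm
  rw [himg]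
  refine (Finset.sum_subset (Finset.subset_univ _) fun b _ hb => ?_).symm
  refine h0 b fun a hab => hb ?_
  rw [Finset.mem_image]
  exact ⟨a, Finset.mem_univ a, hab⟩

section GrassLists

variable {R : Type*} [Ring R] {ι : Type*} (φ : ι → R)

lemma swap_list (hanti : ∀ a b, φ a * φ b + φ b * φ a = 0) (c : ι) :
    ∀ s : List ι, (s.map φ).prod * φ c = ((-1 : ℤ) ^ s.length) • (φ c * (s.map φ).prod) := by
  intro s
  induction s with
  | nil => simp
  | cons a t ih =>
    have hac : φ a * φ c = -(φ c * φ a) := by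
      have := hanti a c; linear_combination (norm := noncomm_ring) this
    rw [List.map_cons, List.prod_cons, mul_assoc, ih, mul_smul_comm, ← mul_assoc, hac, neg_mul,
      List.length_cons, pow_succ, mul_smul, neg_one_smul, mul_assoc (φ c)]

lemma zero_of_mem (hanti : ∀ a b, φ a * φ b + φ b * φ a = 0)
    (hsq : ∀ a, φ a * φ a = 0) (c : ι) :
    ∀ s : List ι, c ∈ s → (s.map φ).prod * φ c = 0 := by
  intro s
  induction s with
  | nil => intro h; simp at h
  | cons a t ih =>
    intro hmem
    rw [List.map_cons, List.prod_cons, mul_assoc]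
    rcases List.mem_cons.mp hmem with h | h
    · subst h
      rw [swap_list φ hanti c t, mul_smul_comm, ← mul_assoc, hsq, zero_mul, smul_zero]
    · rw [ih h, mul_zero]

end GrassLists

section Grass

variable (A' : Type*) [Ring A'] (N : ℕ)

abbrev ΛN := ExteriorAlgebra ℤ (Fin N → ℤ)
abbrev Gr := A' ⊗[ℤ] ΛN N

def ee (i : Fin N) : Fin N → ℤ := Pi.single i 1

lemma ee_inj : Function.Injective (ee N) := by
  intro i j h
  by_contra hne
  have h2 := congrFun h i
  rw [ee, ee, Pi.single_eq_same, Pi.single_eq_of_ne hne] at h2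
  exact one_ne_zero h2

noncomputable def eps (i : Fin N) : Gr A' N := 1 ⊗ₜ ExteriorAlgebra.ι ℤ (ee N i)

noncomputable def cc : A' →+* Gr A' N := Algebra.TensorProduct.includeLeftRingHom

variable {A' N}

lemma cc_apply (a : A') : cc A' N a = a ⊗ₜ 1 := rfl

lemma cc_mul_tmul (a : A') (x : ΛN N) :
    cc A' N a * (1 ⊗ₜ x) = a ⊗ₜ x := by
  rw [cc_apply, Algebra.TensorProduct.tmul_mul_tmul, mul_one, one_mul]

lemma tmul_mul_cc (a : A') (x : ΛN N) :
    (1 ⊗ₜ x : Gr A' N) * cc A' N a = a ⊗ₜ x := by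
  rw [cc_apply, Algebra.TensorProduct.tmul_mul_tmul, mul_one, one_mul]

lemma eps_comm (a : A') (i : Fin N) : Commute (eps A' N i) (cc A' N a) := by
  unfold Commute SemiconjBy
  rw [eps, tmul_mul_cc, cc_mul_tmul]

lemma eps_sq (i : Fin N) : eps A' N i * eps A' N i = 0 := by
  rw [eps, Algebra.TensorProduct.tmul_mul_tmul, one_mul, ExteriorAlgebra.ι_sq_zero,
    TensorProduct.tmul_zero]

lemma eps_add_swap (i j : Fin N) : eps A' N i * eps A' N j + eps A' N j * eps A' N i = 0 := by
  rw [eps, eps, Algebra.TensorProduct.tmul_mul_tmul, Algebra.TensorProduct.tmul_mul_tmul,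
    one_mul, ← TensorProduct.tmul_add, ExteriorAlgebra.ι_add_mul_swap,
    TensorProduct.tmul_zero]

def tprod {n : ℕ} (w : Fin n → Fin N) : ΛN N :=
  ExteriorAlgebra.ιMulti ℤ n fun j => ee N (w j)

lemma tprod_eq_zero {n : ℕ} (w : Fin n → Fin N) (hw : ¬ Function.Injective w) :
    tprod w = 0 := by
  refine AlternatingMap.map_eq_zero_of_not_injective _ _ fun hinj => hw ?_
  intro a b hab
  exact hinj (congrArg (ee N) hab)

lemma tprod_perm {n : ℕ} (w : Fin n → Fin N) (σ : Equiv.Perm (Fin n)) :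
    tprod (fun j => w (σ j)) = (Equiv.Perm.sign σ : ℤ) • tprod w := by
  have := AlternatingMap.map_perm (g := ExteriorAlgebra.ιMulti ℤ n)
    (fun j => ee N (w j)) σ
  rw [tprod, tprod]
  have h2 : ((fun j => ee N (w j)) ∘ σ) = fun j => ee N (w (σ j)) := rfl
  rw [h2] at this
  rw [this, Units.smul_def]

lemma symzero (F : Fin N → Fin N → A') (hsym : ∀ p q, F p q = F q p) :
    ∑ p : Fin N, ∑ q : Fin N, cc A' N (F p q) * (eps A' N p * eps A' N q) = 0 := by
  rw [← Finset.sum_product', Finset.univ_product_univ]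
  refine Finset.sum_ninvolution Prod.swap ?_ ?_ (fun a => Finset.mem_univ _) Prod.swap_swap
  · rintro ⟨p, q⟩
    show cc A' N (F p q) * (eps A' N p * eps A' N q)
        + cc A' N (F q p) * (eps A' N q * eps A' N p) = 0
    rw [hsym q p, ← mul_add, eps_add_swap, mul_zero]
  · rintro ⟨p, q⟩ hne
    intro hswap
    have hpq : q = p := congrArg Prod.fst hswap
    subst hpq
    rw [eps_sq, mul_zero] at hne
    exact hne rfl

lemma tprod_ofFn {n : ℕ} (w : Fin n → Fin N) :
    (1 ⊗ₜ tprod w : Gr A' N) = (List.ofFn fun j => eps A' N (w j)).prod := by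
  have : (List.ofFn fun j => eps A' N (w j))
      = (List.ofFn fun j => ExteriorAlgebra.ι ℤ (ee N (w j))).map
          (Algebra.TensorProduct.includeRight (R := ℤ) (A := A')) := by
    rw [List.map_ofFn]
    rfl
  rw [this, ← map_list_prod, tprod, ExteriorAlgebra.ιMulti_apply,
    Algebra.TensorProduct.includeRight_apply]

lemma rect {n m : ℕ} (T : Fin m → Fin n → A') (r : Fin m → Fin N) :
    (List.ofFn fun j : Fin n => ∑ i : Fin m, cc A' N (T i j) * eps A' N (r i)).prod
      = ∑ g : Fin n → Fin m,
          cc A' N ((List.ofFn fun j => T (g j) j).prod) * (1 ⊗ₜ tprod fun j => r (g j)) := by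
  rw [list_expand]
  refine Finset.sum_congr rfl fun g _ => ?_
  rw [list_pull _ _ _ (fun i j => eps_comm _ _), map_list_prod, List.map_ofFn, tprod_ofFn]
  rfl

lemma key {n : ℕ} (T : Matrix (Fin n) (Fin n) A') (r : Fin n → Fin N)
    (hr : Function.Injective r) :
    (List.ofFn fun j : Fin n => ∑ i : Fin n, cc A' N (T i j) * eps A' N (r i)).prod
      = cc A' N (cdet T) * (1 ⊗ₜ tprod r) := by
  rw [rect T r]
  rw [sum_range_eq (fun σ : Equiv.Perm (Fin n) => ⇑σ)
      (fun σ τ h => Equiv.coe_fn_injective h) _ ?h0]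
  case h0 =>
    intro g hg
    have hginj : ¬ Function.Injective g := by
      intro hinj
      exact hg (Equiv.ofBijective g (Finite.injective_iff_bijective.mp hinj)) rfl
    rw [tprod_eq_zero _ (fun hcomp => hginj (fun a b hab => hcomp (congrArg r hab))),
      TensorProduct.tmul_zero, mul_zero]
  simp only [cdet, map_sum, Finset.sum_mul]
  refine Finset.sum_congr rfl fun σ _ => ?_
  rw [tprod_perm r σ, TensorProduct.tmul_smul, mul_smul_comm, map_zsmul, smul_mul_assoc]

noncomputable def gtop : ΛN N →ₗ[ℤ] ℤ :=
  ExteriorAlgebra.liftAlternating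
    (Function.update (fun i => (0 : (Fin N → ℤ) [⋀^Fin i]→ₗ[ℤ] ℤ)) N
      Matrix.detRowAlternating)

lemma gtop_top : gtop (tprod (id : Fin N → Fin N)) = 1 := by
  rw [gtop, tprod, ExteriorAlgebra.liftAlternating_apply_ιMulti, Function.update_self]
  show Matrix.det (Matrix.of fun i : Fin N => ee N (id i)) = 1
  have h1 : (Matrix.of fun i : Fin N => ee N (id i)) = (1 : Matrix (Fin N) (Fin N) ℤ) := by
    ext i j
    simp [ee, Matrix.one_apply, Pi.single_apply, eq_comm]
  rw [h1, Matrix.det_one]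

lemma extract (u v : A')
    (h : (u ⊗ₜ[ℤ] tprod (id : Fin N → Fin N) : Gr A' N) = v ⊗ₜ tprod id) : u = v := by
  have h2 := congrArg
    (fun z => TensorProduct.rid ℤ A' (LinearMap.lTensor A' (gtop (N := N)) z)) h
  simpa [LinearMap.lTensor_tmul, gtop_top, TensorProduct.rid_tmul] using h2

lemma mulsum (x y : Fin N → A') :
    (∑ p, cc A' N (x p) * eps A' N p) * (∑ q, cc A' N (y q) * eps A' N q)
      = ∑ p, ∑ q, cc A' N (x p * y q) * (eps A' N p * eps A' N q) := by
  rw [Finset.sum_mul_sum]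
  refine Finset.sum_congr rfl fun p _ => Finset.sum_congr rfl fun q _ => ?_
  rw [mul_assoc, ← mul_assoc (eps A' N p), (eps_comm (y q) p).eq,
    mul_assoc, ← mul_assoc, ← map_mul]

lemma sum_mul_cc (z : Fin N → A') (a : A') :
    (∑ p, cc A' N (z p) * eps A' N p) * cc A' N a = ∑ p, cc A' N (z p * a) * eps A' N p := by
  rw [Finset.sum_mul]
  refine Finset.sum_congr rfl fun p _ => ?_
  rw [mul_assoc, (eps_comm a p).eq, ← mul_assoc, ← map_mul]

lemma cc_tmul_mul_cc_tmul (a b : A') (x y : ΛN N) :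
    (cc A' N a * (1 ⊗ₜ x)) * (cc A' N b * (1 ⊗ₜ y))
      = cc A' N (a * b) * (1 ⊗ₜ (x * y)) := by
  rw [cc_mul_tmul, cc_mul_tmul, cc_mul_tmul, Algebra.TensorProduct.tmul_mul_tmul]

lemma tprod_append {k l : ℕ} (u : Fin k → Fin N) (v : Fin l → Fin N) :
    tprod u * tprod v = tprod (Fin.append u v) := by
  rw [tprod, tprod, tprod, ExteriorAlgebra.ιMulti_apply, ExteriorAlgebra.ιMulti_apply,
    ExteriorAlgebra.ιMulti_apply, ← List.prod_append, ← List.ofFn_fin_append]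
  congr 1
  have h : (Fin.append (fun j : Fin k => ExteriorAlgebra.ι ℤ (ee N (u j)))
      (fun j : Fin l => ExteriorAlgebra.ι ℤ (ee N (v j))))
      = fun p => ExteriorAlgebra.ι ℤ (ee N (Fin.append u v p)) := by
    funext p
    refine Fin.addCases (fun i => ?_) (fun i => ?_) p <;>
      simp [Fin.append_left, Fin.append_right]
  rw [h]

end Grass

def colsList (N : ℕ) : (t : ℕ) → t ≤ N → List (Fin N)
  | 0, _ => []
  | t+1, h => colsList N t (Nat.le_of_succ_le h) ++ [⟨t, h⟩]

lemma mem_colsList (N : ℕ) : ∀ (t : ℕ) (h : t ≤ N) (i : Fin N),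
    i.val < t → i ∈ colsList N t h := by
  intro t
  induction t with
  | zero => intro h i hi; omega
  | succ t ih =>
    intro h i hi
    rw [colsList, List.mem_append]
    rcases Nat.lt_succ_iff_lt_or_eq.mp hi with h' | h'
    · exact Or.inl (ih _ i h')
    · right; simp [Fin.ext_iff, h']

lemma prod_colsList {R : Type*} [Ring R] {N : ℕ} (φ : Fin N → R) :
    ∀ (t : ℕ) (h : t ≤ N),
      ((colsList N t h).map φ).prod = (List.ofFn fun j : Fin t => φ (Fin.castLE h j)).prod := by
  intro t
  induction t with
  | zero => intro h; simp [colsList]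
  | succ t ih =>
    intro h
    rw [colsList, List.map_append, List.prod_append, ih, List.ofFn_succ', List.prod_concat]
    simp only [List.map_cons, List.map_nil, List.prod_cons, List.prod_nil, mul_one]
    rfl

lemma cdet_map {A A' : Type*} [Ring A] [Ring A'] (f : A →+* A') {n : ℕ}
    (M : Matrix (Fin n) (Fin n) A) : cdet (M.map f) = f (cdet M) := by
  rw [cdet, cdet, map_sum]
  refine Finset.sum_congr rfl fun σ _ => ?_
  rw [map_zsmul, map_list_prod, List.map_ofFn]
  rfl

set_option maxHeartbeats 2000000 in
lemma master {A' : Type*} [Ring A'] {k l : ℕ}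
    (A1 : Matrix (Fin k) (Fin k) A') (B1 : Matrix (Fin k) (Fin l) A')
    (C1 : Matrix (Fin l) (Fin k) A') (D1 : Matrix (Fin l) (Fin l) A')
    (hMf : IsManin ((Matrix.fromBlocks A1 B1 C1 D1).submatrix
      finSumFinEquiv.symm finSumFinEquiv.symm))
    (Ainv : Matrix (Fin k) (Fin k) A') (hAinv : A1 * Ainv = 1) :
    cdet ((Matrix.fromBlocks A1 B1 C1 D1).submatrix finSumFinEquiv.symm finSumFinEquiv.symm)
      = cdet A1 * cdet (D1 - C1 * Ainv * B1) := by
  classical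
  set Mf : Matrix (Fin (k + l)) (Fin (k + l)) A' :=
    (Matrix.fromBlocks A1 B1 C1 D1).submatrix finSumFinEquiv.symm finSumFinEquiv.symm with hMfdef
  set S : Matrix (Fin l) (Fin l) A' := D1 - C1 * Ainv * B1 with hSdef
  -- entries of Mf
  have hcc : ∀ i j, Mf (Fin.castAdd l i) (Fin.castAdd l j) = A1 i j := by
    intro i j
    simp [hMfdef, Matrix.submatrix_apply]
  have hcn : ∀ i j, Mf (Fin.castAdd l i) (Fin.natAdd k j) = B1 i j := by
    intro i j
    simp [hMfdef, Matrix.submatrix_apply]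
  have hnc : ∀ i j, Mf (Fin.natAdd k i) (Fin.castAdd l j) = C1 i j := by
    intro i j
    simp [hMfdef, Matrix.submatrix_apply]
  have hnn : ∀ i j, Mf (Fin.natAdd k i) (Fin.natAdd k j) = D1 i j := by
    intro i j
    simp [hMfdef, Matrix.submatrix_apply]
  set φ : Fin (k + l) → Gr A' (k + l) :=
    fun q => ∑ p, cc A' (k + l) (Mf p q) * eps A' (k + l) p with hφ
  -- Grassmann relations for the columns
  have hanti : ∀ a b, φ a * φ b + φ b * φ a = 0 := by
    intro a b
    rw [hφ]
    rw [mulsum, mulsum, ← Finset.sum_add_distrib]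
    simp only [← Finset.sum_add_distrib, ← add_mul, ← map_add]
    refine symzero _ fun p q => ?_
    exact sub_eq_sub_iff_add_eq_add.mp (hMf.2 p q a b)
  have hsq : ∀ a, φ a * φ a = 0 := by
    intro a
    rw [hφ, mulsum]
    refine symzero _ fun p q => ?_
    exact (hMf.1 p q a).eq
  set x : Matrix (Fin k) (Fin l) A' := Ainv * B1 with hx
  set φ' : Fin l → Gr A' (k + l) := fun j =>
    φ (Fin.natAdd k j) - ∑ c, φ (Fin.castAdd l c) * cc A' (k + l) (x c j) with hφ'
  have hφ'val : ∀ j, φ' j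
      = ∑ i : Fin l, cc A' (k + l) (S i j) * eps A' (k + l) (Fin.natAdd k i) := by
    intro j
    simp only [hφ', hφ]
    rw [Finset.sum_congr rfl (fun c (_ : c ∈ Finset.univ) => sum_mul_cc
      (fun p => Mf p (Fin.castAdd l c)) (x c j)), Finset.sum_comm, ← Finset.sum_sub_distrib]
    have h2 : ∀ p, cc A' (k+l) (Mf p (Fin.natAdd k j)) * eps A' (k+l) p
        - ∑ c, cc A' (k+l) (Mf p (Fin.castAdd l c) * x c j) * eps A' (k+l) p
        = cc A' (k+l) (Mf p (Fin.natAdd k j) - ∑ c, Mf p (Fin.castAdd l c) * x c j)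
            * eps A' (k+l) p := by
      intro p
      rw [map_sub, sub_mul, map_sum, Finset.sum_mul]
    rw [Finset.sum_congr rfl fun p _ => h2 p, Fin.sum_univ_add]
    have htop : ∀ i : Fin k, Mf (Fin.castAdd l i) (Fin.natAdd k j)
        - ∑ c, Mf (Fin.castAdd l i) (Fin.castAdd l c) * x c j = 0 := by
      intro i
      simp only [hcn, hcc]
      rw [show ∑ c, A1 i c * x c j = (A1 * x) i j from (Matrix.mul_apply).symm,
        hx, ← Matrix.mul_assoc, hAinv, Matrix.one_mul, sub_self]
    have hbot : ∀ i : Fin l, Mf (Fin.natAdd k i) (Fin.natAdd k j)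
        - ∑ c, Mf (Fin.natAdd k i) (Fin.castAdd l c) * x c j = S i j := by
      intro i
      simp only [hnn, hnc]
      rw [show ∑ c, C1 i c * x c j = (C1 * x) i j from (Matrix.mul_apply).symm,
        hx, hSdef, ← Matrix.mul_assoc]
      simp [Matrix.sub_apply]
    simp only [htop, hbot, map_zero, zero_mul, Finset.sum_const_zero, zero_add]
  -- elimination of the lower-left block
  have hcolssucc : ∀ (t : ℕ) (h : k + t + 1 ≤ k + l),
      colsList (k+l) (k+(t+1)) h
        = colsList (k+l) (k+t) (Nat.le_of_succ_le h) ++ [⟨k+t, h⟩] := fun t h => rfl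
  have hstep : ∀ (t : ℕ) (ht : t + 1 ≤ l) (Y : Gr A' (k+l)),
      Y = ((colsList (k+l) (k+t) (by omega)).map φ).prod →
      Y * φ' ⟨t, ht⟩ = Y * φ (⟨k+t, by omega⟩ : Fin (k+l)) := by
    intro t ht Y hY
    simp only [hφ']
    rw [mul_sub]
    have hz : ∀ c : Fin k,
        Y * (φ (Fin.castAdd l c) * cc A' (k+l) (x c ⟨t, ht⟩)) = 0 := by
      intro c
      rw [← mul_assoc, hY, zero_of_mem φ hanti hsq _ _
        (mem_colsList _ _ _ _ (by simpa using lt_of_lt_of_le c.isLt (Nat.le_add_right k t))),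
        zero_mul]
    have hz2 : Y * ∑ c, φ (Fin.castAdd l c) * cc A' (k+l) (x c ⟨t, ht⟩) = 0 := by
      rw [Finset.mul_sum, Finset.sum_congr rfl fun c (_ : c ∈ Finset.univ) => hz c,
        Finset.sum_const_zero]
    rw [hz2, sub_zero]
    rfl
  have elim : ∀ (t : ℕ) (ht : t ≤ l),
      ((colsList (k+l) (k+t) (by omega)).map φ).prod
        = ((colsList (k+l) k (Nat.le_add_right k l)).map φ).prod
          * (List.ofFn fun j : Fin t => φ' (Fin.castLE ht j)).prod := by
    intro t
    induction t with
    | zero =>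
      intro ht
      rw [List.ofFn_zero, List.prod_nil, mul_one]
      rfl
    | succ t ih =>
      intro ht
      have ht' : t ≤ l := Nat.le_of_succ_le ht
      rw [hcolssucc t (by omega), List.map_append, List.prod_append]
      simp only [List.map_cons, List.map_nil, List.prod_cons, List.prod_nil, mul_one]
      rw [ih ht', List.ofFn_succ', List.prod_concat]
      have e1 : (fun j : Fin t => φ' (Fin.castLE ht j.castSucc))
          = fun j : Fin t => φ' (Fin.castLE ht' j) := rfl
      have e2 : φ' (Fin.castLE ht (Fin.last t)) = φ' ⟨t, ht⟩ := rfl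
      rw [e1, e2, ← mul_assoc]
      exact (hstep t ht _ (ih ht').symm).symm
  -- injectivity facts
  have hnatinj : Function.Injective (Fin.natAdd k : Fin l → Fin (k+l)) := by
    intro a b hab
    have h := congrArg Fin.val hab
    simp only [Fin.coe_natAdd] at h
    exact Fin.ext (by omega)
  have hcastinj : Function.Injective (Fin.castAdd l : Fin k → Fin (k+l)) := by
    intro a b hab
    have h := congrArg Fin.val hab
    simp only [Fin.coe_castAdd] at h
    exact Fin.ext h
  -- the three product evaluations
  have hKeyN : ((colsList (k+l) (k+l) (le_refl _)).map φ).prod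
      = cc A' (k+l) (cdet Mf) * (1 ⊗ₜ tprod (id : Fin (k+l) → Fin (k+l))) := by
    rw [prod_colsList]
    have e : (fun j : Fin (k+l) => φ (Fin.castLE (le_refl (k+l)) j)) = fun j =>
        ∑ i, cc A' (k+l) (Mf i j) * eps A' (k+l) (id i) := by
      funext j; simp only [hφ]; rfl
    rw [e]
    exact key Mf id Function.injective_id
  have hP2 : (List.ofFn fun j : Fin l => φ' j).prod
      = cc A' (k+l) (cdet S) * (1 ⊗ₜ tprod (Fin.natAdd k)) := by
    have e : (fun j : Fin l => φ' j) = fun j =>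
        ∑ i, cc A' (k+l) (S i j) * eps A' (k+l) (Fin.natAdd k i) := funext hφ'val
    rw [e]
    exact key S (Fin.natAdd k) hnatinj
  have hP1 : ((colsList (k+l) k (Nat.le_add_right k l)).map φ).prod
      = ∑ g : Fin k → Fin (k+l),
          cc A' (k+l) ((List.ofFn fun j => Mf (g j) (Fin.castAdd l j)).prod)
            * (1 ⊗ₜ tprod fun j => id (g j)) := by
    rw [prod_colsList]
    have e : (fun j : Fin k => φ (Fin.castLE (Nat.le_add_right k l) j)) = fun j =>
        ∑ i, cc A' (k+l) (Mf i (Fin.castAdd l j)) * eps A' (k+l) (id i) := by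
      funext j; simp only [hφ]; rfl
    rw [e]
    exact rect (fun p q => Mf p (Fin.castAdd l q)) id
  -- permutation bookkeeping
  have hτ : ∀ σ : Equiv.Perm (Fin k),
      Fin.append (fun j => Fin.castAdd l (σ j)) (Fin.natAdd k)
        = ⇑(Equiv.permCongr finSumFinEquiv (σ.sumCongr (Equiv.refl (Fin l)))) := by
    intro σ; funext p
    refine Fin.addCases (fun i => ?_) (fun i => ?_) p
    · rw [Fin.append_left]
      simp [Equiv.permCongr_apply, finSumFinEquiv_symm_apply_castAdd, finSumFinEquiv_apply_left]
    · rw [Fin.append_right]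
      simp [Equiv.permCongr_apply, finSumFinEquiv_symm_apply_natAdd, finSumFinEquiv_apply_right]
  have hsignτ : ∀ σ : Equiv.Perm (Fin k),
      Equiv.Perm.sign (Equiv.permCongr finSumFinEquiv (σ.sumCongr (Equiv.refl (Fin l))))
        = Equiv.Perm.sign σ := by
    intro σ
    rw [Equiv.Perm.sign_permCongr, Equiv.Perm.sign_sumCongr, Equiv.Perm.sign_refl, mul_one]
  -- the main identity
  have main : cc A' (k+l) (cdet Mf) * (1 ⊗ₜ tprod (id : Fin (k+l) → Fin (k+l)))
      = cc A' (k+l) (cdet A1 * cdet S) * (1 ⊗ₜ tprod id) := by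
    rw [← hKeyN, elim l le_rfl]
    have e : (fun j : Fin l => φ' (Fin.castLE (le_refl l) j)) = fun j : Fin l => φ' j := rfl
    rw [e, hP2, hP1, Finset.sum_mul]
    have hterm : ∀ g : Fin k → Fin (k+l),
        (cc A' (k+l) ((List.ofFn fun j => Mf (g j) (Fin.castAdd l j)).prod)
            * (1 ⊗ₜ tprod fun j => id (g j)))
          * (cc A' (k+l) (cdet S) * (1 ⊗ₜ tprod (Fin.natAdd k)))
        = cc A' (k+l) ((List.ofFn fun j => Mf (g j) (Fin.castAdd l j)).prod * cdet S)
            * (1 ⊗ₜ tprod (Fin.append g (Fin.natAdd k))) := by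
      intro g
      rw [cc_tmul_mul_cc_tmul, tprod_append]
      rfl
    rw [Finset.sum_congr rfl fun g _ => hterm g]
    rw [sum_range_eq (fun (σ : Equiv.Perm (Fin k)) (j : Fin k) => Fin.castAdd l (σ j))
      (fun σ τ hst => Equiv.ext fun j => hcastinj (congrFun hst j)) _ ?hkill]
    case hkill =>
      intro g hg
      have h : ¬ Function.Injective (Fin.append g (Fin.natAdd k)) := by
        intro hinj
        have hlt : ∀ j, (g j).val < k := by
          intro j
          by_contra hge
          push_neg at hge
          have hgj : g j = Fin.natAdd k ⟨(g j).val - k, by omega⟩ := by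
            apply Fin.ext; simp [Fin.coe_natAdd]; omega
          have h2 : Fin.append g (Fin.natAdd k) (Fin.castAdd l j)
              = Fin.append g (Fin.natAdd k) (Fin.natAdd k ⟨(g j).val - k, by omega⟩) := by
            rw [Fin.append_left, Fin.append_right]
            exact hgj
          have h3 := congrArg Fin.val (hinj h2)
          simp [Fin.coe_castAdd, Fin.coe_natAdd] at h3
          omega
        have hginj : Function.Injective g := by
          intro a b hab
          have h2 : Fin.append g (Fin.natAdd k) (Fin.castAdd l a)
              = Fin.append g (Fin.natAdd k) (Fin.castAdd l b) := by
            rw [Fin.append_left, Fin.append_left, hab]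
          exact hcastinj (hinj h2)
        have hg'inj : Function.Injective (fun j => (⟨(g j).val, hlt j⟩ : Fin k)) := by
          intro a b hab
          simp only [Fin.mk.injEq] at hab
          exact hginj (Fin.ext hab)
        refine hg (Equiv.ofBijective _ (Finite.injective_iff_bijective.mp hg'inj)) ?_
        funext j
        show Fin.castAdd l ⟨(g j).val, hlt j⟩ = g j
        exact Fin.ext rfl
      rw [tprod_eq_zero _ h, TensorProduct.tmul_zero, mul_zero]
    have hterm2 : ∀ σ : Equiv.Perm (Fin k),
        cc A' (k+l) ((List.ofFn fun j => Mf (Fin.castAdd l (σ j)) (Fin.castAdd l j)).prod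
              * cdet S)
          * (1 ⊗ₜ tprod (Fin.append (fun j => Fin.castAdd l (σ j)) (Fin.natAdd k)))
        = cc A' (k+l) (((Equiv.Perm.sign σ : ℤ) • (List.ofFn fun j => A1 (σ j) j).prod)
              * cdet S) * (1 ⊗ₜ tprod (id : Fin (k+l) → Fin (k+l))) := by
      intro σ
      rw [hτ σ]
      have h5 : tprod ⇑(Equiv.permCongr finSumFinEquiv (σ.sumCongr (Equiv.refl (Fin l))))
          = ((Equiv.Perm.sign σ : ℤ)) • tprod (id : Fin (k+l) → Fin (k+l)) := by
        have h6 := tprod_perm (id : Fin (k+l) → Fin (k+l))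
          (Equiv.permCongr finSumFinEquiv (σ.sumCongr (Equiv.refl (Fin l))))
        rw [hsignτ σ] at h6
        exact h6
      rw [h5, TensorProduct.tmul_smul, mul_smul_comm]
      simp only [hcc]
      rw [smul_mul_assoc, map_zsmul, smul_mul_assoc]
    rw [Finset.sum_congr rfl fun σ _ => hterm2 σ, ← Finset.sum_mul, ← map_sum,
      ← Finset.sum_mul]
    simp only [cdet]
  have h9 : (cdet Mf) ⊗ₜ[ℤ] tprod (id : Fin (k+l) → Fin (k+l))
      = (cdet A1 * cdet S) ⊗ₜ tprod (id : Fin (k+l) → Fin (k+l)) := by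
    calc (cdet Mf) ⊗ₜ[ℤ] tprod (id : Fin (k+l) → Fin (k+l))
        = cc A' (k+l) (cdet Mf) * (1 ⊗ₜ tprod (id : Fin (k+l) → Fin (k+l))) :=
          (cc_mul_tmul _ _).symm
      _ = cc A' (k+l) (cdet A1 * cdet S) * (1 ⊗ₜ tprod (id : Fin (k+l) → Fin (k+l))) := main
      _ = (cdet A1 * cdet S) ⊗ₜ tprod (id : Fin (k+l) → Fin (k+l)) := cc_mul_tmul _ _
  exact extract _ _ h9

end Stmt6Aux


/-- Schur complement formula for the column-ordered determinant of a Manin matrix,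
when the top-left block has a right inverse in an overalgebra `A'` into which the
base algebra embeds. -/
theorem stmt6 {A A' : Type*} [Ring A] [Ring A'] (f : A →+* A')
    (hf : Function.Injective f) (k l : ℕ)
    (Ablk : Matrix (Fin k) (Fin k) A) (B : Matrix (Fin k) (Fin l) A)
    (C : Matrix (Fin l) (Fin k) A) (D : Matrix (Fin l) (Fin l) A)
    (hM : IsManin ((Matrix.fromBlocks Ablk B C D).submatrix
      finSumFinEquiv.symm finSumFinEquiv.symm))
    (Ainv : Matrix (Fin k) (Fin k) A') (hAinv : Ablk.map f * Ainv = 1) :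
    f (cdet ((Matrix.fromBlocks Ablk B C D).submatrix
        finSumFinEquiv.symm finSumFinEquiv.symm)) =
      cdet (Ablk.map f) * cdet (D.map f - C.map f * Ainv * B.map f) := by
  have h1 : (Matrix.fromBlocks (Ablk.map f) (B.map f) (C.map f) (D.map f)).submatrix
        (finSumFinEquiv.symm : Fin (k+l) → Fin k ⊕ Fin l) finSumFinEquiv.symm
      = (((Matrix.fromBlocks Ablk B C D).submatrix
          finSumFinEquiv.symm finSumFinEquiv.symm).map f) := by
    rw [← Matrix.fromBlocks_map, Matrix.submatrix_map]
  have hManin : IsManin (((Matrix.fromBlocks Ablk B C D).submatrix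
      finSumFinEquiv.symm finSumFinEquiv.symm).map f) := by
    obtain ⟨hc, hr⟩ := hM
    constructor
    · intro i k' j
      exact (hc i k' j).map f
    · intro i k' j l'
      have h2 := congrArg f (hr i k' j l')
      simpa [map_sub, map_mul, Matrix.map_apply] using h2
  have h3 := Stmt6Aux.master (Ablk.map f) (B.map f) (C.map f) (D.map f)
    (by rw [h1]; exact hManin) Ainv hAinv
  rw [h1, Stmt6Aux.cdet_map f] at h3
  exact h3
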